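/- Let α ≥ 0, γ ≥ 1 be real and β ∈ ℂ with 2(γ+α) > |β|. Then for all z in the open unit disc, the normalized Rabotnov function satisfies |𝓡_{α,β,γ}(z)| ≤ (2(γ+α)+|β|)/(2(γ+α)−|β|). -/

import Mathlib

open Complex

noncomputable def rabA (α γ : ℝ) (β : ℂ) (n : ℕ) : ℂ :=
  β ^ n * (Real.Gamma (γ + α) : ℂ) / (Real.Gamma ((γ + α) * (n + 1)) : ℂ)

noncomputable def rab (α γ : ℝ) (β : ℂ) (z : ℂ) : ℂ :=
  z + ∑' k : ℕ, rabA α γ β (k + 1) * z ^ (k + 2)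

noncomputable def rabPartial (α γ : ℝ) (β : ℂ) (m : ℕ) (z : ℂ) : ℂ :=
  z + ∑ k ∈ Finset.range m, rabA α γ β (k + 1) * z ^ (k + 2)

noncomputable def rabD (α γ : ℝ) (β : ℂ) (z : ℂ) : ℂ :=
  1 + ∑' k : ℕ, ((k : ℂ) + 2) * rabA α γ β (k + 1) * z ^ (k + 1)

noncomputable def rabDPartial (α γ : ℝ) (β : ℂ) (m : ℕ) (z : ℂ) : ℂ :=
  1 + ∑ k ∈ Finset.range m, ((k : ℂ) + 2) * rabA α γ β (k + 1) * z ^ (k + 1)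

noncomputable def rabAlex (α γ : ℝ) (β : ℂ) (z : ℂ) : ℂ :=
  z + ∑' k : ℕ, rabA α γ β (k + 1) / ((k : ℂ) + 2) * z ^ (k + 2)

noncomputable def rabAlexPartial (α γ : ℝ) (β : ℂ) (m : ℕ) (z : ℂ) : ℂ :=
  z + ∑ k ∈ Finset.range m, rabA α γ β (k + 1) / ((k : ℂ) + 2) * z ^ (k + 2)



lemma gamma_lb (c : ℝ) (hc : 1 ≤ c) : ∀ n : ℕ, 1 ≤ n →
    Real.Gamma c * (2*c)^n ≤ 2 * Real.Gamma (c*(n+1)) := by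
  have hc0 : 0 < c := lt_of_lt_of_le one_pos hc
  have mono := Real.Gamma_strictMonoOn_Ici.monotoneOn
  intro n hn
  induction n with
  | zero => omega
  | succ m ih =>
    rcases Nat.eq_or_lt_of_le hn with h|h
    · -- m = 0, n = 1: Γ c * (2c) ≤ 2 * Γ (2c)
      have hm : m = 0 := by omega
      subst hm
      have h1 : Real.Gamma (c+1) ≤ Real.Gamma (c*2) := by
        apply mono (by simp; linarith) (by simp; linarith) (by linarith)
      rw [Real.Gamma_add_one (ne_of_gt hc0)] at h1
      push_cast
      norm_num
      nlinarith
    · have hm : 1 ≤ m := by omega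
      have ih' := ih hm
      have key : 2*c * Real.Gamma (c*(m+1)) ≤ Real.Gamma (c*(m+2)) := by
        have h1 : Real.Gamma (c*(m+1)+1) ≤ Real.Gamma (c*(m+1)+c) := by
          apply mono ?_ ?_ (by linarith)
          · simp only [Set.mem_Ici]
            nlinarith [(Nat.one_le_cast (α := ℝ)).mpr hm]
          · simp only [Set.mem_Ici]
            nlinarith [(Nat.one_le_cast (α := ℝ)).mpr hm]
        rw [Real.Gamma_add_one (by positivity)] at h1
        have h2 : 2*c ≤ c*(m+1) := by
          nlinarith [(Nat.one_le_cast (α := ℝ)).mpr hm]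
        have hg : 0 < Real.Gamma (c*(m+1)) := Real.Gamma_pos_of_pos (by positivity)
        calc 2*c * Real.Gamma (c*(m+1)) ≤ c*(m+1) * Real.Gamma (c*(m+1)) := by nlinarith
        _ ≤ Real.Gamma (c*(m+1)+c) := h1
        _ = Real.Gamma (c*(m+2)) := by ring_nf
      calc Real.Gamma c * (2*c)^(m+1) = (Real.Gamma c * (2*c)^m) * (2*c) := by ring
      _ ≤ 2 * Real.Gamma (c*(m+1)) * (2*c) := by
          have : 0 < 2*c := by linarith
          nlinarith [Real.Gamma_pos_of_pos hc0]
      _ = 2 * (2*c * Real.Gamma (c*(m+1))) := by ring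
      _ ≤ 2 * Real.Gamma (c*(m+2)) := by linarith
      _ = 2 * Real.Gamma (c*((m+1:ℕ)+1)) := by norm_num; ring_nf

theorem rab_bound (α γ : ℝ) (β : ℂ) (hα : 0 ≤ α) (hγ : 1 ≤ γ)
    (hβ : ‖β‖ < 2 * (γ + α)) (z : ℂ) (hz : ‖z‖ < 1) :
    ‖rab α γ β z‖ ≤
      (2 * (γ + α) + ‖β‖) / (2 * (γ + α) - ‖β‖) := by
  set c := γ + α with hcdef
  set b := ‖β‖ with hbdef
  have hc : 1 ≤ c := by simp [hcdef]; linarith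
  have hc0 : (0:ℝ) < c := by linarith
  have hb0 : 0 ≤ b := norm_nonneg β
  set q := b / (2*c) with hqdef
  have hq0 : 0 ≤ q := by positivity
  have hq1 : q < 1 := by
    rw [hqdef, div_lt_one (by linarith)]; exact hβ
  -- termwise bound
  have hterm : ∀ k : ℕ, ‖rabA α γ β (k + 1) * z ^ (k + 2)‖ ≤ 2 * q ^ (k+1) := by
    intro k
    have hg1 : 0 < Real.Gamma c := Real.Gamma_pos_of_pos hc0
    have hg2 : 0 < Real.Gamma (c * ((k+1:ℕ) + 1)) := by
      apply Real.Gamma_pos_of_pos; positivity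
    have habs : ‖rabA α γ β (k+1) * z ^ (k+2)‖
        = b^(k+1) * Real.Gamma c / Real.Gamma (c * ((k+1:ℕ)+1)) * ‖z‖^(k+2) := by
      have hca : 0 < γ + α := hc0
      have hg1' : 0 < Real.Gamma (γ + α) := hg1
      have hg2' : 0 < Real.Gamma ((γ+α) * ((k:ℝ)+1+1)) :=
        Real.Gamma_pos_of_pos (by positivity)
      simp only [rabA, norm_mul, norm_div, norm_pow, Complex.norm_real, Real.norm_eq_abs,
        abs_of_pos hg1']
      push_cast
      rw [abs_of_pos hg2', hcdef, hbdef]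
    rw [habs]
    have hzk : ‖z‖^(k+2) ≤ 1 := pow_le_one₀ (norm_nonneg z) hz.le
    have hKey : b^(k+1) * Real.Gamma c / Real.Gamma (c * ((k+1:ℕ)+1)) ≤ 2 * q^(k+1) := by
      rw [div_le_iff₀ hg2]
      have hgam := gamma_lb c hc (k+1) (by omega)
      have h2 : (0:ℝ) < (2*c)^(k+1) := by positivity
      have hq : q^(k+1) * (2*c)^(k+1) = b^(k+1) := by
        rw [hqdef, div_pow]; field_simp
      have hmul : b^(k+1) * Real.Gamma c * (2*c)^(k+1)
          ≤ 2 * q^(k+1) * Real.Gamma (c * ((k+1:ℕ)+1)) * (2*c)^(k+1) := by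
        calc b^(k+1) * Real.Gamma c * (2*c)^(k+1)
            = b^(k+1) * (Real.Gamma c * (2*c)^(k+1)) := by ring
          _ ≤ b^(k+1) * (2 * Real.Gamma (c * ((k+1:ℕ)+1))) :=
              mul_le_mul_of_nonneg_left hgam (pow_nonneg hb0 (k+1))
          _ = 2 * (q^(k+1) * (2*c)^(k+1)) * Real.Gamma (c * ((k+1:ℕ)+1)) := by
              rw [hq]; ring
          _ = 2 * q^(k+1) * Real.Gamma (c * ((k+1:ℕ)+1)) * (2*c)^(k+1) := by ring
      exact le_of_mul_le_mul_right hmul h2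
    calc b^(k+1) * Real.Gamma c / Real.Gamma (c * ((k+1:ℕ)+1)) * ‖z‖^(k+2)
        ≤ b^(k+1) * Real.Gamma c / Real.Gamma (c * ((k+1:ℕ)+1)) * 1 := by
          apply mul_le_mul_of_nonneg_left hzk (by positivity)
      _ = b^(k+1) * Real.Gamma c / Real.Gamma (c * ((k+1:ℕ)+1)) := by ring
      _ ≤ 2 * q^(k+1) := hKey
  -- summability
  have hsum2 : Summable (fun k : ℕ => 2 * q^(k+1)) :=
    ((summable_geometric_of_lt_one hq0 hq1).mul_left 2).comp_injective Nat.succ_injective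
  have hsum1 : Summable (fun k : ℕ => ‖rabA α γ β (k+1) * z^(k+2)‖) :=
    Summable.of_nonneg_of_le (fun k => norm_nonneg _) hterm hsum2
  have htsum : ∑' k : ℕ, 2 * q^(k+1) = 2*q * (1-q)⁻¹ := by
    have h : (fun k : ℕ => 2*q^(k+1)) = fun k => (2*q)*q^k := by
      funext k; ring
    rw [h, tsum_mul_left, tsum_geometric_of_lt_one hq0 hq1]
  have heq : 1 + 2*q*(1-q)⁻¹ = (2*c+b)/(2*c-b) := by
    have h1 : (0:ℝ) < 2*c - b := by linarith
    rw [hqdef]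
    rw [show (1 - b/(2*c)) = (2*c-b)/(2*c) by field_simp]
    field_simp
    ring
  rw [← heq]
  simp only [rab] at *
  calc ‖z + ∑' k : ℕ, rabA α γ β (k+1) * z^(k+2)‖
      ≤ ‖z‖ + ‖∑' k : ℕ, rabA α γ β (k+1) * z^(k+2)‖ := norm_add_le _ _
    _ ≤ 1 + ∑' k : ℕ, ‖rabA α γ β (k+1) * z^(k+2)‖ := by
        gcongr
        all_goals first
          | exact hz.le
          | exact norm_tsum_le_tsum_norm hsum1
    _ ≤ 1 + ∑' k : ℕ, 2 * q^(k+1) := by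
        gcongr
        exact hterm _
    _ = 1 + 2*q*(1-q)⁻¹ := by rw [htsum]
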